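/- arXiv:0906.5185 — 4 statements merged into one kernel-verified Lean document; each statement's English description precedes it below -/
import Mathlib

section
/- The restriction of α to the center Z(A) is an injective homomorphism of C-algebras into A₊^op ⊗_C A₋; in particular, the image α(Z(A)) is a commutative subalgebra of A₊^op ⊗_C A₋ isomorphic to Z(A). -/
open scoped TensorProduct

noncomputable section

set_option synthInstance.maxHeartbeats 1000000 in
set_option maxHeartbeats 1000000 in
/-- Let `A` be a unital associative `ℂ`-algebra, `A₊, A₋` unital subalgebras such that
the multiplication map `μ : A₊ᵒᵖ ⊗[ℂ] A₋ → A` is bijective, and let `α` be the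
inverse of `μ`.  Then the restriction of `α` to the center of `A` is an injective
`ℂ`-algebra homomorphism into `A₊ᵒᵖ ⊗[ℂ] A₋`, and its image is commutative. -/
theorem stmt3 (A : Type*) [Ring A] [Algebra ℂ A] (Ap Am : Subalgebra ℂ A)
    (μ : ((↥Ap)ᵐᵒᵖ ⊗[ℂ] ↥Am) →ₗ[ℂ] A)
    (hμ : ∀ (x : (↥Ap)ᵐᵒᵖ) (y : ↥Am), μ (x ⊗ₜ[ℂ] y) = (x.unop : A) * (y : A))
    (hbij : Function.Bijective μ)
    (α : A →ₗ[ℂ] ((↥Ap)ᵐᵒᵖ ⊗[ℂ] ↥Am))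
    (hα : ∀ t, α (μ t) = t) :
    α 1 = 1 ∧
    (∀ x y, x ∈ Set.center A → y ∈ Set.center A → α (x * y) = α x * α y) ∧
    Set.InjOn α (Set.center A) ∧
    (∀ x y, x ∈ Set.center A → y ∈ Set.center A → α x * α y = α y * α x) := by
  -- μ ∘ α = id
  have hμα : ∀ w : A, μ (α w) = w := by
    intro w
    obtain ⟨u, rfl⟩ := hbij.2 w
    rw [hα]
  -- auxiliary: μ (s * (x ⊗ y)) = x * μ s * y
  have aux : ∀ (s : ((↥Ap)ᵐᵒᵖ ⊗[ℂ] ↥Am)) (x : (↥Ap)ᵐᵒᵖ) (y : ↥Am),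
      μ (s * x ⊗ₜ[ℂ] y) = (x.unop : A) * μ s * (y : A) := by
    intro s x y
    induction s using TensorProduct.induction_on with
    | zero => rw [zero_mul, map_zero, mul_zero, zero_mul]
    | tmul p m =>
        rw [Algebra.TensorProduct.tmul_mul_tmul, hμ, hμ]
        simp only [MulOpposite.unop_mul, Subalgebra.coe_mul, Submonoid.coe_mul, mul_assoc]
    | add s t hs ht =>
        rw [add_mul, map_add, map_add, hs, ht, mul_add, add_mul]
  -- key: for central z, μ (α z * t) = z * μ t
  have key : ∀ z ∈ Set.center A, ∀ t, μ (α z * t) = z * μ t := by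
    intro z hz t
    induction t using TensorProduct.induction_on with
    | zero => rw [mul_zero, map_zero, mul_zero]
    | tmul x y =>
        rw [aux, hμα, hμ]
        have := Set.mem_center_iff.mp hz
        rw [← this.comm, mul_assoc]
    | add s t hs ht =>
        rw [mul_add, map_add, hs, ht, map_add, mul_add]
  have hmul : ∀ x y, x ∈ Set.center A → y ∈ Set.center A → α (x * y) = α x * α y := by
    intro x y hx _
    have : x * y = μ (α x * α y) := by rw [key x hx (α y), hμα]
    rw [this, hα]
  refine ⟨?_, hmul, ?_, ?_⟩
  · have : (1 : A) = μ 1 := by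
      rw [Algebra.TensorProduct.one_def, hμ]; simp
    rw [this, hα]
  · intro x _ y _ h
    have := congrArg μ h
    rwa [hμα, hμα] at this
  · intro x y hx hy
    rw [← hmul x y hx hy, ← hmul y x hy hx]
    congr 1
    exact (Set.mem_center_iff.mp hx).comm y
end
end

section
/- The operators K_1,…,K_N pairwise commute: K_i ∘ K_j = K_j ∘ K_i for all i, j. -/
open MvPolynomial

noncomputable section

abbrev Rzl (N : ℕ) := MvPolynomial (Fin N ⊕ Fin N) ℂ

/-- The automorphism `s_ij^z` exchanging `z_i ↔ z_j` only. -/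
def sZ (N : ℕ) (i j : Fin N) : Rzl N ≃ₐ[ℂ] Rzl N :=
  renameEquiv ℂ (Equiv.sumCongr (Equiv.swap i j) (Equiv.refl (Fin N)))

/-- The automorphism `s_ij^λ` exchanging `λ_i ↔ λ_j` only. -/
def sL (N : ℕ) (i j : Fin N) : Rzl N ≃ₐ[ℂ] Rzl N :=
  renameEquiv ℂ (Equiv.sumCongr (Equiv.refl (Fin N)) (Equiv.swap i j))

namespace CheredAux

variable {N : ℕ}

/-! ### swap combinatorics -/

lemma swap_sq {α} [DecidableEq α] (i j : α) :
    ∀ x, Equiv.swap i j (Equiv.swap i j x) = x := fun x => Equiv.swap_apply_self _ _ _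

lemma swap_disj {α} [DecidableEq α] {a b c d : α}
    (hac : a ≠ c) (had : a ≠ d) (hbc : b ≠ c) (hbd : b ≠ d) :
    ∀ x, Equiv.swap a b (Equiv.swap c d x) = Equiv.swap c d (Equiv.swap a b x) := by
  intro x
  simp only [Equiv.swap_apply_def]
  split_ifs <;> simp_all

lemma swap_cyc1 {α} [DecidableEq α] {i j m : α} (hij : i ≠ j) (hjm : j ≠ m) (him : i ≠ m) :
    ∀ x, Equiv.swap i m (Equiv.swap i j x) = Equiv.swap i j (Equiv.swap j m x) := by
  intro x
  simp only [Equiv.swap_apply_def]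
  split_ifs <;> simp_all

lemma swap_cyc2 {α} [DecidableEq α] {i j m : α} (hij : i ≠ j) (hjm : j ≠ m) (him : i ≠ m) :
    ∀ x, Equiv.swap j m (Equiv.swap i m x) = Equiv.swap i j (Equiv.swap j m x) := by
  intro x
  simp only [Equiv.swap_apply_def]
  split_ifs <;> simp_all

lemma swap_cyc1' {α} [DecidableEq α] {i j m : α} (hij : i ≠ j) (hjm : j ≠ m) (him : i ≠ m) :
    ∀ x, Equiv.swap j m (Equiv.swap i j x) = Equiv.swap i m (Equiv.swap j m x) := by
  intro x
  simp only [Equiv.swap_apply_def]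
  split_ifs <;> simp_all

lemma swap_cyc2' {α} [DecidableEq α] {i j m : α} (hij : i ≠ j) (hjm : j ≠ m) (him : i ≠ m) :
    ∀ x, Equiv.swap i j (Equiv.swap i m x) = Equiv.swap i m (Equiv.swap j m x) := by
  intro x
  simp only [Equiv.swap_apply_def]
  split_ifs <;> simp_all

/-! ### sum-swap computations -/

lemma swap_inl_inl (a b c : Fin N) :
    Equiv.swap (Sum.inl a : Fin N ⊕ Fin N) (Sum.inl b) (Sum.inl c) = Sum.inl (Equiv.swap a b c) := by
  simp only [Equiv.swap_apply_def]
  split_ifs <;> simp_all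

lemma swap_inl_inr (a b c : Fin N) :
    Equiv.swap (Sum.inl a : Fin N ⊕ Fin N) (Sum.inl b) (Sum.inr c) = Sum.inr c := by
  simp only [Equiv.swap_apply_def]
  split_ifs <;> simp_all

lemma swap_inr_inr (a b c : Fin N) :
    Equiv.swap (Sum.inr a : Fin N ⊕ Fin N) (Sum.inr b) (Sum.inr c) = Sum.inr (Equiv.swap a b c) := by
  simp only [Equiv.swap_apply_def]
  split_ifs <;> simp_all

lemma swap_inr_inl (a b c : Fin N) :
    Equiv.swap (Sum.inr a : Fin N ⊕ Fin N) (Sum.inr b) (Sum.inl c) = Sum.inl c := by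
  simp only [Equiv.swap_apply_def]
  split_ifs <;> simp_all


/-! ### rename composition lemmas -/

lemma sZ_sZ_of {a b c d a' b' c' d' : Fin N}
    (h : ∀ x, Equiv.swap a b (Equiv.swap c d x) = Equiv.swap a' b' (Equiv.swap c' d' x))
    (p : Rzl N) : sZ N a b (sZ N c d p) = sZ N a' b' (sZ N c' d' p) := by
  simp only [sZ, renameEquiv_apply, rename_rename]
  have hf : (⇑(Equiv.sumCongr (Equiv.swap a b) (Equiv.refl (Fin N))) ∘
      ⇑(Equiv.sumCongr (Equiv.swap c d) (Equiv.refl (Fin N)))) =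
      (⇑(Equiv.sumCongr (Equiv.swap a' b') (Equiv.refl (Fin N))) ∘
      ⇑(Equiv.sumCongr (Equiv.swap c' d') (Equiv.refl (Fin N)))) := by
    funext x
    cases x with
    | inl y => simp [swap_inl_inl, h y]
    | inr y => simp [swap_inl_inr]
  rw [hf]

lemma sL_sL_of {a b c d a' b' c' d' : Fin N}
    (h : ∀ x, Equiv.swap a b (Equiv.swap c d x) = Equiv.swap a' b' (Equiv.swap c' d' x))
    (p : Rzl N) : sL N a b (sL N c d p) = sL N a' b' (sL N c' d' p) := by
  simp only [sL, renameEquiv_apply, rename_rename]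
  have hf : (⇑((Equiv.refl (Fin N)).sumCongr (Equiv.swap a b)) ∘
      ⇑((Equiv.refl (Fin N)).sumCongr (Equiv.swap c d))) =
      (⇑((Equiv.refl (Fin N)).sumCongr (Equiv.swap a' b')) ∘
      ⇑((Equiv.refl (Fin N)).sumCongr (Equiv.swap c' d'))) := by
    funext x
    cases x with
    | inl y => simp [swap_inr_inl]
    | inr y => simp [swap_inr_inr, h y]
  rw [hf]

lemma sZ_comm_sL (a b c d : Fin N) (p : Rzl N) :
    sZ N a b (sL N c d p) = sL N c d (sZ N a b p) := by
  simp only [sZ, sL, renameEquiv_apply, rename_rename]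
  have hf : (⇑(Equiv.sumCongr (Equiv.swap a b) (Equiv.refl (Fin N))) ∘
      ⇑((Equiv.refl (Fin N)).sumCongr (Equiv.swap c d))) =
      (⇑((Equiv.refl (Fin N)).sumCongr (Equiv.swap c d)) ∘
      ⇑(Equiv.sumCongr (Equiv.swap a b) (Equiv.refl (Fin N)))) := by
    funext x
    cases x with
    | inl y => simp [swap_inl_inl, swap_inl_inr, swap_inr_inl, swap_inr_inr]
    | inr y => simp [swap_inl_inl, swap_inl_inr, swap_inr_inl, swap_inr_inr]
  rw [hf]

lemma sZ_swap_comm (a b : Fin N) (p : Rzl N) : sZ N a b p = sZ N b a p := by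
  rw [sZ, sZ, Equiv.swap_comm]

lemma sL_swap_comm (a b : Fin N) (p : Rzl N) : sL N a b p = sL N b a p := by
  rw [sL, sL, Equiv.swap_comm]

lemma sZ_sZ_self (a b : Fin N) (p : Rzl N) : sZ N a b (sZ N a b p) = p := by
  simp only [sZ, renameEquiv_apply, rename_rename]
  rw [show (⇑(Equiv.sumCongr (Equiv.swap a b) (Equiv.refl (Fin N))) ∘
      ⇑(Equiv.sumCongr (Equiv.swap a b) (Equiv.refl (Fin N)))) = id by
    funext x; cases x with
    | inl y => simp [swap_inl_inl]
    | inr y => simp [swap_inl_inr]]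
  exact DFunLike.congr_fun rename_id p

lemma sZ_X_inr (a b c : Fin N) : sZ N a b (X (Sum.inr c) : Rzl N) = X (Sum.inr c) := by
  simp only [sZ, renameEquiv_apply, rename_X]
  simp [swap_inl_inr]

lemma sZ_X_inl (a b c : Fin N) :
    sZ N a b (X (Sum.inl c) : Rzl N) = X (Sum.inl (Equiv.swap a b c)) := by
  simp only [sZ, renameEquiv_apply, rename_X]
  simp [swap_inl_inl, swap_inl_inr]

lemma sL_X_inl (a b c : Fin N) : sL N a b (X (Sum.inl c) : Rzl N) = X (Sum.inl c) := by
  simp only [sL, renameEquiv_apply, rename_X]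
  simp [swap_inr_inl]

lemma sL_X_inr (a b c : Fin N) :
    sL N a b (X (Sum.inr c) : Rzl N) = X (Sum.inr (Equiv.swap a b c)) := by
  simp only [sL, renameEquiv_apply, rename_X]
  simp [swap_inr_inr, swap_inr_inl]


/-! ### properties of the divided difference operators -/

section Dlemmas

variable (D : Fin N → Fin N → Rzl N → Rzl N)
  (hD : ∀ i j : Fin N, i ≠ j → ∀ p : Rzl N,
    (X (Sum.inr i) - X (Sum.inr j)) * D i j p = p - sL N i j p)

lemma LX_sub_ne {i j : Fin N} (h : i ≠ j) :
    (X (Sum.inr i) - X (Sum.inr j) : Rzl N) ≠ 0 :=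
  sub_ne_zero.mpr (fun he => h (Sum.inr.inj (X_injective he)))

include hD

lemma D_unique {i j : Fin N} (h : i ≠ j) {p q : Rzl N}
    (hq : (X (Sum.inr i) - X (Sum.inr j)) * q = p - sL N i j p) : q = D i j p :=
  mul_left_cancel₀ (LX_sub_ne h) (hq.trans (hD i j h p).symm)

lemma D_add {i j : Fin N} (h : i ≠ j) (p q : Rzl N) :
    D i j (p + q) = D i j p + D i j q := by
  refine (D_unique D hD h ?_).symm
  rw [mul_add, hD i j h p, hD i j h q, map_add]
  ring

lemma D_neg {i j : Fin N} (h : i ≠ j) (p : Rzl N) :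
    D i j (-p) = - D i j p := by
  refine (D_unique D hD h ?_).symm
  rw [mul_neg, hD i j h p, map_neg]
  ring

lemma D_sub {i j : Fin N} (h : i ≠ j) (p q : Rzl N) :
    D i j (p - q) = D i j p - D i j q := by
  rw [sub_eq_add_neg, D_add D hD h, D_neg D hD h, sub_eq_add_neg]

lemma D_sum {i j : Fin N} (h : i ≠ j) {α : Type*} (s : Finset α) (f : α → Rzl N) :
    D i j (∑ x ∈ s, f x) = ∑ x ∈ s, D i j (f x) := by
  refine (D_unique D hD h ?_).symm
  rw [Finset.mul_sum, map_sum]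
  simp_rw [hD i j h]
  rw [Finset.sum_sub_distrib]

lemma D_mul_inv {i j : Fin N} (h : i ≠ j) {r : Rzl N} (hr : sL N i j r = r) (p : Rzl N) :
    D i j (r * p) = r * D i j p := by
  refine (D_unique D hD h ?_).symm
  rw [mul_left_comm, hD i j h p, map_mul, hr]
  ring

lemma D_sZ {i j : Fin N} (h : i ≠ j) (a b : Fin N) (p : Rzl N) :
    D i j (sZ N a b p) = sZ N a b (D i j p) := by
  refine (D_unique D hD h ?_).symm
  have : (X (Sum.inr i) - X (Sum.inr j)) * sZ N a b (D i j p)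
      = sZ N a b ((X (Sum.inr i) - X (Sum.inr j)) * D i j p) := by
    rw [map_mul, map_sub, sZ_X_inr, sZ_X_inr]
  rw [this, hD i j h p, map_sub, sZ_comm_sL]

lemma D_antisym {i j : Fin N} (h : i ≠ j) (p : Rzl N) :
    D j i p = - D i j p := by
  refine (D_unique D hD h.symm ?_).symm
  rw [sL_swap_comm j i]
  linear_combination (hD i j h p)

lemma D_conj {a b i j : Fin N} (hij : i ≠ j) (p : Rzl N) :
    sL N a b (D i j p)
      = D (Equiv.swap a b i) (Equiv.swap a b j) (sL N a b p) := by
  refine D_unique D hD (fun he => hij ((Equiv.swap a b).injective he)) ?_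
  have e1 : (X (Sum.inr (Equiv.swap a b i)) - X (Sum.inr (Equiv.swap a b j)) : Rzl N)
      = sL N a b (X (Sum.inr i) - X (Sum.inr j)) := by
    rw [map_sub, sL_X_inr, sL_X_inr]
  rw [e1, ← map_mul, hD i j hij p, map_sub]
  congr 1
  refine sL_sL_of (fun x => ?_) p
  rw [Equiv.swap_apply_apply]
  simp [Equiv.Perm.mul_apply]

lemma D_D_disjoint {i k j l : Fin N} (hik : i ≠ k) (hjl : j ≠ l)
    (hij : i ≠ j) (hil : i ≠ l) (hkj : k ≠ j) (hkl : k ≠ l) (p : Rzl N) :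
    D j l (D i k p) = D i k (D j l p) := by
  refine D_unique D hD hik ?_
  have hr : sL N j l (X (Sum.inr i) - X (Sum.inr k) : Rzl N)
      = X (Sum.inr i) - X (Sum.inr k) := by
    rw [map_sub, sL_X_inr, sL_X_inr, Equiv.swap_apply_of_ne_of_ne hij hil,
      Equiv.swap_apply_of_ne_of_ne hkj hkl]
  calc (X (Sum.inr i) - X (Sum.inr k)) * D j l (D i k p)
      = D j l ((X (Sum.inr i) - X (Sum.inr k)) * D i k p) :=
        (D_mul_inv D hD hjl hr _).symm
    _ = D j l p - D j l (sL N i k p) := by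
        rw [hD i k hik p, D_sub D hD hjl]
    _ = D j l p - sL N i k (D j l p) := by
        have := D_conj D hD (a := i) (b := k) hjl p
        rw [Equiv.swap_apply_of_ne_of_ne hij.symm hkj.symm,
          Equiv.swap_apply_of_ne_of_ne hil.symm hkl.symm] at this
        rw [this]

lemma D_braid {i j m : Fin N} (hij : i ≠ j) (hjm : j ≠ m) (him : i ≠ m) (p : Rzl N) :
    D i j (D j m p) = D i m (D i j p) + D j m (D i m p) := by
  have hF : ((X (Sum.inr i) - X (Sum.inr j)) * ((X (Sum.inr j) - X (Sum.inr m)) *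
      (X (Sum.inr i) - X (Sum.inr m))) : Rzl N) ≠ 0 :=
    mul_ne_zero (LX_sub_ne hij) (mul_ne_zero (LX_sub_ne hjm) (LX_sub_ne him))
  apply mul_left_cancel₀ hF
  have e1 : (X (Sum.inr i) - X (Sum.inr j)) * D i j (D j m p)
      = D j m p - D i m (sL N i j p) := by
    rw [hD i j hij (D j m p)]
    have c1 : sL N i j (D j m p) = D i m (sL N i j p) := by
      have := D_conj D hD (a := i) (b := j) hjm p
      rwa [Equiv.swap_apply_right, Equiv.swap_apply_of_ne_of_ne him.symm hjm.symm] at this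
    rw [c1]
  have e2 := hD j m hjm p
  have e3 := hD i m him (sL N i j p)
  have e4 : (X (Sum.inr i) - X (Sum.inr m)) * D i m (D i j p)
      = D i j p + D j m (sL N i m p) := by
    rw [hD i m him (D i j p)]
    have c2 : sL N i m (D i j p) = D m j (sL N i m p) := by
      have := D_conj D hD (a := i) (b := m) hij p
      rwa [Equiv.swap_apply_left, Equiv.swap_apply_of_ne_of_ne hij.symm hjm] at this
    rw [c2, D_antisym D hD hjm (sL N i m p)]
    ring
  have e5 := hD i j hij p
  have e6 : (X (Sum.inr j) - X (Sum.inr m)) * D j m (sL N i m p)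
      = sL N i m p - sL N i m (sL N i j p) := by
    rw [hD j m hjm (sL N i m p)]
    have q5a : sL N j m (sL N i m p) = sL N i m (sL N i j p) :=
      sL_sL_of (fun x => (swap_cyc2 hij hjm him x).trans (swap_cyc1 hij hjm him x).symm) p
    rw [q5a]
  have e7 : (X (Sum.inr j) - X (Sum.inr m)) * D j m (D i m p)
      = D i m p - D i j (sL N j m p) := by
    rw [hD j m hjm (D i m p)]
    have c3 : sL N j m (D i m p) = D i j (sL N j m p) := by
      have := D_conj D hD (a := j) (b := m) him p
      rwa [Equiv.swap_apply_of_ne_of_ne hij him, Equiv.swap_apply_right] at this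
    rw [c3]
  have e8 := hD i m him p
  have e9 : (X (Sum.inr i) - X (Sum.inr j)) * D i j (sL N j m p)
      = sL N j m p - sL N i m (sL N i j p) := by
    rw [hD i j hij (sL N j m p)]
    have q5b : sL N i j (sL N j m p) = sL N i m (sL N i j p) :=
      sL_sL_of (fun x => (swap_cyc1 hij hjm him x).symm) p
    rw [q5b]
  linear_combination (X (Sum.inr j) - X (Sum.inr m) : Rzl N) * (X (Sum.inr i) - X (Sum.inr m)) * e1
    + (X (Sum.inr i) - X (Sum.inr m) : Rzl N) * e2
    - (X (Sum.inr j) - X (Sum.inr m) : Rzl N) * e3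
    - ((X (Sum.inr j) - X (Sum.inr m) : Rzl N) * (X (Sum.inr i) - X (Sum.inr j)) * e4
      + (X (Sum.inr j) - X (Sum.inr m) : Rzl N) * e5
      + (X (Sum.inr i) - X (Sum.inr j) : Rzl N) * e6)
    - ((X (Sum.inr i) - X (Sum.inr j) : Rzl N) * (X (Sum.inr i) - X (Sum.inr m)) * e7
      + (X (Sum.inr i) - X (Sum.inr j) : Rzl N) * e8
      - (X (Sum.inr i) - X (Sum.inr m) : Rzl N) * e9)


lemma g_disjoint {i j k l : Fin N} (hij : i ≠ j) (hik : i ≠ k) (hil : i ≠ l)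
    (hjk : j ≠ k) (hjl : j ≠ l) (hkl : k ≠ l) (p : Rzl N) :
    sZ N i k (sZ N j l (D i k (D j l p))) = sZ N j l (sZ N i k (D j l (D i k p))) := by
  rw [D_D_disjoint D hD hik hjl hij hil hjk.symm hkl]
  exact sZ_sZ_of (swap_disj hij hil hjk.symm hkl) _

lemma g_ji {i j : Fin N} (hij : i ≠ j) (p : Rzl N) :
    sZ N i j (sZ N j i (D i j (D j i p))) = sZ N j i (sZ N i j (D j i (D i j p))) := by
  simp only [D_antisym D hD hij, D_neg D hD hij, map_neg, sZ_swap_comm j i]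

lemma D_triple {i j m : Fin N} (hij : i ≠ j) (hjm : j ≠ m) (him : i ≠ m) (p : Rzl N) :
    sZ N i j (sZ N j m (D i j (D j m p)))
      + sZ N i m (sZ N j i (D i m (D j i p)))
      + sZ N i m (sZ N j m (D i m (D j m p)))
    = sZ N j m (sZ N i j (D j m (D i j p)))
      + sZ N j i (sZ N i m (D j i (D i m p)))
      + sZ N j m (sZ N i m (D j m (D i m p))) := by
  have z1 : ∀ q : Rzl N, sZ N i m (sZ N i j q) = sZ N i j (sZ N j m q) :=
    fun q => sZ_sZ_of (swap_cyc1 hij hjm him) q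
  have z2 : ∀ q : Rzl N, sZ N j m (sZ N i m q) = sZ N i j (sZ N j m q) :=
    fun q => sZ_sZ_of (swap_cyc2 hij hjm him) q
  have z3 : ∀ q : Rzl N, sZ N j m (sZ N i j q) = sZ N i m (sZ N j m q) :=
    fun q => sZ_sZ_of (swap_cyc1' hij hjm him) q
  have z4 : ∀ q : Rzl N, sZ N i j (sZ N i m q) = sZ N i m (sZ N j m q) :=
    fun q => sZ_sZ_of (swap_cyc2' hij hjm him) q
  simp only [D_antisym D hD hij, D_neg D hD him, map_neg, sZ_swap_comm j i]
  simp only [z1, z2, z3, z4]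
  have hb2 : D j m (D i j p) = D i j (D i m p) + D i m (D j m p) := by
    have braid2 := D_braid D hD hij.symm him hjm p
    simp only [D_antisym D hD hij, D_neg D hD hjm] at braid2
    linear_combination braid2
  have hc : sZ N i j (sZ N j m (D i j (D j m p)))
      = sZ N i j (sZ N j m (D i m (D i j p))) + sZ N i j (sZ N j m (D j m (D i m p))) := by
    rw [D_braid D hD hij hjm him p, map_add, map_add]
  have hc' : sZ N i m (sZ N j m (D j m (D i j p)))
      = sZ N i m (sZ N j m (D i j (D i m p))) + sZ N i m (sZ N j m (D i m (D j m p))) := by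
    rw [hb2, map_add, map_add]
  rw [hc, hc']
  ring

omit hD in
lemma sum_decomp {β : Type*} [AddCommGroup β] {i j : Fin N} (hij : i ≠ j)
    (g : Fin N → Fin N → β) (hji : g j i = 0)
    (hdisj : ∀ k l, k ≠ i → k ≠ j → l ≠ i → l ≠ j → k ≠ l → g k l = 0) :
    ∑ k ∈ Finset.univ.erase i, ∑ l ∈ Finset.univ.erase j, g k l
      = ∑ m ∈ (Finset.univ.erase i).erase j, (g j m + (g m i + g m m)) := by
  have erase_comm' : ((Finset.univ.erase j).erase i : Finset (Fin N))
      = (Finset.univ.erase i).erase j := by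
    ext x
    simp only [Finset.mem_erase, Finset.mem_univ, and_true]
    tauto
  have hjmem : j ∈ Finset.univ.erase i := Finset.mem_erase.2 ⟨hij.symm, Finset.mem_univ j⟩
  have himem : i ∈ Finset.univ.erase j := Finset.mem_erase.2 ⟨hij, Finset.mem_univ i⟩
  rw [← Finset.add_sum_erase _ _ hjmem]
  rw [← Finset.add_sum_erase _ (g j) himem, hji, zero_add, erase_comm']
  have hrow : ∀ k ∈ (Finset.univ.erase i).erase j,
      (∑ l ∈ Finset.univ.erase j, g k l) = g k i + g k k := by
    intro k hk
    have hkj : k ≠ j := (Finset.mem_erase.1 hk).1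
    have hki : k ≠ i := (Finset.mem_erase.1 (Finset.mem_erase.1 hk).2).1
    rw [← Finset.add_sum_erase _ (g k) himem, erase_comm']
    rw [← Finset.add_sum_erase _ (g k) hk]
    rw [Finset.sum_eq_zero, add_zero]
    intro l hl
    have hlk : l ≠ k := (Finset.mem_erase.1 hl).1
    have hlj : l ≠ j := (Finset.mem_erase.1 (Finset.mem_erase.1 hl).2).1
    have hli : l ≠ i :=
      (Finset.mem_erase.1 (Finset.mem_erase.1 (Finset.mem_erase.1 hl).2).2).1
    exact hdisj k l hki hkj hli hlj hlk.symm
  rw [Finset.sum_congr rfl hrow]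
  simp only [Finset.sum_add_distrib]

lemma K_expand (K : Fin N → Module.End ℂ (Rzl N))
    (hK : ∀ (i : Fin N) (p : Rzl N),
      K i p = X (Sum.inl i) * p + ∑ j ∈ Finset.univ.erase i, sZ N i j (D i j p))
    {a b : Fin N} (hab : a ≠ b) (p : Rzl N) :
    K a (K b p)
      = X (Sum.inl a) * (X (Sum.inl b) * p)
        + (X (Sum.inl a) * sZ N b a (D b a p)
          + ∑ l ∈ (Finset.univ.erase b).erase a, X (Sum.inl a) * sZ N b l (D b l p))
        + (X (Sum.inl a) * sZ N a b (D a b p)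
          + ∑ k ∈ (Finset.univ.erase a).erase b, X (Sum.inl b) * sZ N a k (D a k p))
        + ∑ k ∈ Finset.univ.erase a, ∑ l ∈ Finset.univ.erase b,
            sZ N a k (sZ N b l (D a k (D b l p))) := by
  have hmem_b : b ∈ Finset.univ.erase a := Finset.mem_erase.2 ⟨hab.symm, Finset.mem_univ b⟩
  have hmem_a : a ∈ Finset.univ.erase b := Finset.mem_erase.2 ⟨hab, Finset.mem_univ a⟩
  rw [hK a (K b p), hK b p]
  have inner : ∀ k ∈ Finset.univ.erase a,
      sZ N a k (D a k (X (Sum.inl b) * p + ∑ l ∈ Finset.univ.erase b, sZ N b l (D b l p)))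
      = X (Sum.inl (Equiv.swap a k b)) * sZ N a k (D a k p)
        + ∑ l ∈ Finset.univ.erase b, sZ N a k (sZ N b l (D a k (D b l p))) := by
    intro k hk
    have hak : a ≠ k := ((Finset.mem_erase.1 hk).1).symm
    rw [D_add D hD hak, D_mul_inv D hD hak (sL_X_inl a k b) p, D_sum D hD hak,
        map_add, map_mul, sZ_X_inl, map_sum]
    congr 1
    refine Finset.sum_congr rfl (fun l hl => ?_)
    rw [D_sZ D hD hak]
  rw [Finset.sum_congr rfl inner, Finset.sum_add_distrib]
  rw [mul_add, Finset.mul_sum]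
  rw [← Finset.add_sum_erase _ (fun l => X (Sum.inl a) * sZ N b l (D b l p)) hmem_a]
  rw [← Finset.add_sum_erase _
      (fun k => X (Sum.inl (Equiv.swap a k b)) * sZ N a k (D a k p)) hmem_b,
    Equiv.swap_apply_right]
  have fix : ∑ k ∈ (Finset.univ.erase a).erase b,
        X (Sum.inl (Equiv.swap a k b)) * sZ N a k (D a k p)
      = ∑ k ∈ (Finset.univ.erase a).erase b, X (Sum.inl b) * sZ N a k (D a k p) := by
    refine Finset.sum_congr rfl (fun k hk => ?_)
    have hkb : k ≠ b := (Finset.mem_erase.1 hk).1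
    rw [Equiv.swap_apply_of_ne_of_ne hab.symm hkb.symm]
  rw [fix]
  ring

lemma main_step (K : Fin N → Module.End ℂ (Rzl N))
    (hK : ∀ (i : Fin N) (p : Rzl N),
      K i p = X (Sum.inl i) * p + ∑ j ∈ Finset.univ.erase i, sZ N i j (D i j p))
    {i j : Fin N} (hij : i ≠ j) (p : Rzl N) :
    K i (K j p) = K j (K i p) := by
  have hA : sZ N j i (D j i p) = - sZ N i j (D i j p) := by
    rw [D_antisym D hD hij p, map_neg, sZ_swap_comm j i]
  have key : ∑ k ∈ Finset.univ.erase i, ∑ l ∈ Finset.univ.erase j,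
      (sZ N i k (sZ N j l (D i k (D j l p)))
        - sZ N j l (sZ N i k (D j l (D i k p)))) = 0 := by
    rw [sum_decomp hij _ ?_ ?_]
    · refine Finset.sum_eq_zero (fun m hm => ?_)
      have hmj : m ≠ j := (Finset.mem_erase.1 hm).1
      have hmi : m ≠ i := (Finset.mem_erase.1 (Finset.mem_erase.1 hm).2).1
      have := D_triple D hD hij (Ne.symm hmj) (Ne.symm hmi) p
      linear_combination this
    · rw [g_ji D hD hij p]
      ring
    · intro k l hki hkj hli hlj hkl
      rw [g_disjoint D hD hij (Ne.symm hki) (Ne.symm hli) (Ne.symm hkj) (Ne.symm hlj) hkl p]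
      ring
  have hDbl : ∑ k ∈ Finset.univ.erase i, ∑ l ∈ Finset.univ.erase j,
        sZ N i k (sZ N j l (D i k (D j l p)))
      = ∑ k ∈ Finset.univ.erase j, ∑ l ∈ Finset.univ.erase i,
        sZ N j k (sZ N i l (D j k (D i l p))) := by
    have hR : (∑ k ∈ Finset.univ.erase j, ∑ l ∈ Finset.univ.erase i,
          sZ N j k (sZ N i l (D j k (D i l p))))
        = ∑ k ∈ Finset.univ.erase i, ∑ l ∈ Finset.univ.erase j,
          sZ N j l (sZ N i k (D j l (D i k p))) := Finset.sum_comm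
    rw [hR, ← sub_eq_zero, ← Finset.sum_sub_distrib]
    simp_rw [← Finset.sum_sub_distrib]
    exact key
  rw [K_expand D hD K hK hij p, K_expand D hD K hK hij.symm p, hA, hDbl]
  ring

end Dlemmas


end CheredAux

set_option synthInstance.maxHeartbeats 1000000 in
/-- The Dunkl-type operators `K_i` of the polynomial representation of the rational
Cherednik algebra pairwise commute.  Here `D i j p` is the divided difference
`(p − s_ij^λ p)/(λ_i − λ_j)` and
`K_i p = z_i p + Σ_{j ≠ i} s_ij^z (D i j p)`. -/
theorem stmt4 (N : ℕ) (hN : 0 < N)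
    (D : Fin N → Fin N → Rzl N → Rzl N)
    (hD : ∀ i j : Fin N, i ≠ j → ∀ p : Rzl N,
      (X (Sum.inr i) - X (Sum.inr j)) * D i j p = p - sL N i j p)
    (K : Fin N → Module.End ℂ (Rzl N))
    (hK : ∀ (i : Fin N) (p : Rzl N),
      K i p = X (Sum.inl i) * p + ∑ j ∈ Finset.univ.erase i, sZ N i j (D i j p)) :
    ∀ i j : Fin N, K i * K j = K j * K i := by
  intro i j
  rcases eq_or_ne i j with rfl | hij
  · rfl
  · refine LinearMap.ext fun p => ?_
    rw [Module.End.mul_apply, Module.End.mul_apply]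
    exact CheredAux.main_step D hD K hK hij p
end
end

section
/- For all i ≠ j one has (multiplication by λ_i) ∘ K_j − K_j ∘ (multiplication by λ_i) = s_ij^{zλ}, and for all i one has (multiplication by λ_i) ∘ K_i − K_i ∘ (multiplication by λ_i) = − Σ_{a ≠ i} s_ia^{zλ}; moreover σ̂ ∘ K_i ∘ σ̂^{-1} = K_{σ(i)} for every σ ∈ S_N and every i. (Thus multiplication by λ_i, the operators K_i, and the operators s_ij^{zλ} satisfy the defining relations of the rational Cherednik algebra H_N.) -/
open MvPolynomial

noncomputable section

def permHat (N : ℕ) (σ : Equiv.Perm (Fin N)) : Rzl N ≃ₐ[ℂ] Rzl N :=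
  renameEquiv ℂ (Equiv.sumCongr σ σ)

/-- The automorphism `σ̂` as an endomorphism of `ℂ[z,λ]`. -/
def permOp (N : ℕ) (σ : Equiv.Perm (Fin N)) : Module.End ℂ (Rzl N) :=
  (permHat N σ).toLinearMap

/-- The automorphism `s_ij^{zλ}` exchanging both `z_i ↔ z_j` and `λ_i ↔ λ_j`. -/
def sZL (N : ℕ) (i j : Fin N) : Rzl N ≃ₐ[ℂ] Rzl N :=
  renameEquiv ℂ (Equiv.sumCongr (Equiv.swap i j) (Equiv.swap i j))

/-- Multiplication by a polynomial, as an endomorphism of `ℂ[z,λ]`. -/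
def mulP (N : ℕ) (p : Rzl N) : Module.End ℂ (Rzl N) := LinearMap.mulLeft ℂ p

section Helpers

variable {N : ℕ}

lemma X_inr_sub_ne_zero {i j : Fin N} (h : i ≠ j) :
    (X (Sum.inr i) - X (Sum.inr j) : Rzl N) ≠ 0 :=
  sub_ne_zero.2 fun e => h (Sum.inr_injective (X_injective e))

lemma sL_X_inr (i j k : Fin N) :
    sL N i j (X (Sum.inr k)) = X (Sum.inr (Equiv.swap i j k)) := by
  simp only [sL, renameEquiv_apply, rename_X, Equiv.sumCongr_apply, Sum.map_inr]

lemma sZ_X_inr (i j k : Fin N) :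
    sZ N i j (X (Sum.inr k)) = X (Sum.inr k) := by
  simp [sZ, Equiv.swap_apply_def]

lemma sZ_mul_X_inr (i j k : Fin N) (q : Rzl N) :
    sZ N i j (X (Sum.inr k) * q) = X (Sum.inr k) * sZ N i j q := by
  rw [map_mul, sZ_X_inr]

lemma sZ_sL (i j : Fin N) (p : Rzl N) :
    sZ N i j (sL N i j p) = sZL N i j p := by
  simp only [sZ, sL, sZL, renameEquiv_apply, rename_rename]
  have h : ⇑(Equiv.sumCongr (Equiv.swap i j) (Equiv.refl (Fin N))) ∘
      ⇑(Equiv.sumCongr (Equiv.refl (Fin N)) (Equiv.swap i j)) =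
      ⇑(Equiv.sumCongr (Equiv.swap i j) (Equiv.swap i j)) := by
    funext x
    cases x <;> simp [Equiv.swap_apply_def] <;> split_ifs <;> simp_all
  rw [h]

lemma sZL_comm (i j : Fin N) : sZL N i j = sZL N j i := by
  rw [sZL, sZL, Equiv.swap_comm]

lemma sL_comm (i j : Fin N) : sL N i j = sL N j i := by
  rw [sL, sL, Equiv.swap_comm]

lemma permHat_X_inl (σ : Equiv.Perm (Fin N)) (i : Fin N) :
    permHat N σ (X (Sum.inl i)) = X (Sum.inl (σ i)) := by
  simp [permHat]

lemma permHat_X_inr (σ : Equiv.Perm (Fin N)) (i : Fin N) :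
    permHat N σ (X (Sum.inr i)) = X (Sum.inr (σ i)) := by
  simp [permHat]

lemma permHat_permHat (σ τ : Equiv.Perm (Fin N)) (p : Rzl N) :
    permHat N σ (permHat N τ p) = permHat N (σ * τ) p := by
  simp only [permHat, renameEquiv_apply, rename_rename]
  have h : ⇑(Equiv.sumCongr σ σ) ∘ ⇑(Equiv.sumCongr τ τ) =
      ⇑(Equiv.sumCongr (σ * τ) (σ * τ)) := by
    funext x; cases x <;> simp
  rw [h]

lemma permHat_inv_cancel (σ : Equiv.Perm (Fin N)) (p : Rzl N) :
    permHat N σ (permHat N σ⁻¹ p) = p := by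
  rw [permHat_permHat, mul_inv_cancel]
  simp only [permHat, renameEquiv_apply]
  have : ⇑(Equiv.sumCongr (1 : Equiv.Perm (Fin N)) (1 : Equiv.Perm (Fin N))) = id := by
    funext x; cases x <;> simp
  rw [this]
  exact congrArg (fun f => f p) rename_id

lemma permHat_sZ (σ : Equiv.Perm (Fin N)) (i j : Fin N) (p : Rzl N) :
    permHat N σ (sZ N i j p) = sZ N (σ i) (σ j) (permHat N σ p) := by
  simp only [permHat, sZ, renameEquiv_apply, rename_rename]
  have h : ⇑(Equiv.sumCongr σ σ) ∘
      ⇑(Equiv.sumCongr (Equiv.swap i j) (Equiv.refl (Fin N))) =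
      ⇑(Equiv.sumCongr (Equiv.swap (σ i) (σ j)) (Equiv.refl (Fin N))) ∘
      ⇑(Equiv.sumCongr σ σ) := by
    funext x
    cases x with
    | inl a =>
      simp only [Function.comp_apply, Equiv.sumCongr_apply, Sum.map_inl]
      rw [Equiv.swap_apply_apply]
      simp
    | inr a => simp [Equiv.swap_apply_def]
  rw [h, ← rename_rename]

lemma permHat_sL (σ : Equiv.Perm (Fin N)) (i j : Fin N) (p : Rzl N) :
    permHat N σ (sL N i j p) = sL N (σ i) (σ j) (permHat N σ p) := by
  simp only [permHat, sL, renameEquiv_apply, rename_rename]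
  have h : ⇑(Equiv.sumCongr σ σ) ∘
      ⇑(Equiv.sumCongr (Equiv.refl (Fin N)) (Equiv.swap i j)) =
      ⇑(Equiv.sumCongr (Equiv.refl (Fin N)) (Equiv.swap (σ i) (σ j))) ∘
      ⇑(Equiv.sumCongr σ σ) := by
    funext x
    cases x with
    | inl a => simp [Equiv.swap_apply_def]
    | inr a =>
      simp only [Function.comp_apply, Equiv.sumCongr_apply, Sum.map_inr]
      rw [Equiv.swap_apply_apply]
      simp
  rw [h, ← rename_rename]

variable (D : Fin N → Fin N → Rzl N → Rzl N)
variable (hD : ∀ i j : Fin N, i ≠ j → ∀ p : Rzl N,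
    (X (Sum.inr i) - X (Sum.inr j)) * D i j p = p - sL N i j p)

include hD

/-- If `c ∉ {i,j}`, then `D i j` commutes with multiplication by `λ_c`. -/
lemma D_mul_other {i j c : Fin N} (hij : i ≠ j) (hci : c ≠ i) (hcj : c ≠ j) (p : Rzl N) :
    D i j (X (Sum.inr c) * p) = X (Sum.inr c) * D i j p := by
  have h1 := hD i j hij (X (Sum.inr c) * p)
  have h2 := hD i j hij p
  rw [map_mul, sL_X_inr, Equiv.swap_apply_of_ne_of_ne hci hcj] at h1
  apply mul_left_cancel₀ (X_inr_sub_ne_zero hij)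
  linear_combination h1 - X (Sum.inr c) * h2

lemma D_mul_left {i j : Fin N} (hij : i ≠ j) (p : Rzl N) :
    X (Sum.inr i) * D i j p - D i j (X (Sum.inr i) * p) = - sL N i j p := by
  have h1 := hD i j hij (X (Sum.inr i) * p)
  have h2 := hD i j hij p
  rw [map_mul, sL_X_inr, Equiv.swap_apply_left] at h1
  apply mul_left_cancel₀ (X_inr_sub_ne_zero hij)
  linear_combination X (Sum.inr i) * h2 - h1

lemma D_mul_right {i j : Fin N} (hij : i ≠ j) (p : Rzl N) :
    X (Sum.inr j) * D i j p - D i j (X (Sum.inr j) * p) = sL N i j p := by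
  have h1 := hD i j hij (X (Sum.inr j) * p)
  have h2 := hD i j hij p
  rw [map_mul, sL_X_inr, Equiv.swap_apply_right] at h1
  apply mul_left_cancel₀ (X_inr_sub_ne_zero hij)
  linear_combination X (Sum.inr j) * h2 - h1

lemma D_conj (σ : Equiv.Perm (Fin N)) {i j : Fin N} (hij : i ≠ j) (p : Rzl N) :
    permHat N σ (D i j (permHat N σ⁻¹ p)) = D (σ i) (σ j) p := by
  have hσij : σ i ≠ σ j := fun e => hij (σ.injective e)
  apply mul_left_cancel₀ (X_inr_sub_ne_zero hσij)
  rw [hD (σ i) (σ j) hσij p]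
  have key : (X (Sum.inr (σ i)) - X (Sum.inr (σ j)) : Rzl N) =
      permHat N σ (X (Sum.inr i) - X (Sum.inr j)) := by
    rw [map_sub, permHat_X_inr, permHat_X_inr]
  rw [key, ← map_mul, hD i j hij, map_sub, permHat_inv_cancel, permHat_sL,
    permHat_inv_cancel]

end Helpers

set_option synthInstance.maxHeartbeats 1000000 in
/-- Multiplication by `λ_i`, the operators `K_i` and the operators `s_ij^{zλ}`
satisfy the defining relations of the rational Cherednik algebra `H_N`. -/
theorem stmt5 (N : ℕ) (hN : 0 < N)
    (D : Fin N → Fin N → Rzl N → Rzl N)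
    (hD : ∀ i j : Fin N, i ≠ j → ∀ p : Rzl N,
      (X (Sum.inr i) - X (Sum.inr j)) * D i j p = p - sL N i j p)
    (K : Fin N → Module.End ℂ (Rzl N))
    (hK : ∀ (i : Fin N) (p : Rzl N),
      K i p = X (Sum.inl i) * p + ∑ j ∈ Finset.univ.erase i, sZ N i j (D i j p)) :
    (∀ i j : Fin N, i ≠ j →
      mulP N (X (Sum.inr i)) * K j - K j * mulP N (X (Sum.inr i)) =
        (sZL N i j).toLinearMap) ∧
    (∀ i : Fin N,
      mulP N (X (Sum.inr i)) * K i - K i * mulP N (X (Sum.inr i)) =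
        - ∑ a ∈ Finset.univ.erase i, (sZL N i a).toLinearMap) ∧
    (∀ (σ : Equiv.Perm (Fin N)) (i : Fin N),
      permOp N σ * K i * permOp N σ⁻¹ = K (σ i)) := by
  refine ⟨?_, ?_, ?_⟩
  · -- relation for i ≠ j
    intro i j hij
    refine LinearMap.ext fun p => ?_
    simp only [LinearMap.sub_apply, Module.End.mul_apply, mulP, LinearMap.mulLeft_apply,
      AlgEquiv.toLinearMap_apply]
    rw [hK j p, hK j (X (Sum.inr i) * p)]
    have hsum : X (Sum.inr i) * (∑ a ∈ Finset.univ.erase j, sZ N j a (D j a p)) -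
        ∑ a ∈ Finset.univ.erase j, sZ N j a (D j a (X (Sum.inr i) * p)) =
        sZL N i j p := by
      rw [Finset.mul_sum, ← Finset.sum_sub_distrib]
      rw [Finset.sum_eq_single_of_mem i
        (Finset.mem_erase.2 ⟨hij, Finset.mem_univ i⟩)]
      · rw [← sZ_mul_X_inr, ← map_sub, D_mul_right D hD (Ne.symm hij), sZ_sL,
          sZL_comm]
      · intro b hb hbi
        have hbj : b ≠ j := (Finset.mem_erase.1 hb).1
        rw [← sZ_mul_X_inr, ← map_sub,
          D_mul_other D hD (Ne.symm hbj) hij (Ne.symm hbi) p]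
        simp
    linear_combination hsum
  · -- diagonal relation
    intro i
    refine LinearMap.ext fun p => ?_
    simp only [LinearMap.sub_apply, Module.End.mul_apply, mulP, LinearMap.mulLeft_apply,
      LinearMap.neg_apply, LinearMap.coe_sum, Finset.sum_apply,
      AlgEquiv.toLinearMap_apply]
    rw [hK i p, hK i (X (Sum.inr i) * p)]
    have hsum : X (Sum.inr i) * (∑ a ∈ Finset.univ.erase i, sZ N i a (D i a p)) -
        ∑ a ∈ Finset.univ.erase i, sZ N i a (D i a (X (Sum.inr i) * p)) =
        - ∑ a ∈ Finset.univ.erase i, sZL N i a p := by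
      rw [Finset.mul_sum, ← Finset.sum_sub_distrib, ← Finset.sum_neg_distrib]
      refine Finset.sum_congr rfl fun a ha => ?_
      have hia : i ≠ a := fun e => (Finset.mem_erase.1 ha).1 e.symm
      rw [← sZ_mul_X_inr, ← map_sub, D_mul_left D hD hia, map_neg, sZ_sL]
    linear_combination hsum
  · -- equivariance
    intro σ i
    refine LinearMap.ext fun p => ?_
    simp only [Module.End.mul_apply, permOp, AlgEquiv.toLinearMap_apply]
    rw [hK i (permHat N σ⁻¹ p), hK (σ i) p]
    rw [map_add, map_mul, permHat_X_inl, permHat_inv_cancel, map_sum]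
    congr 1
    have hterm : ∀ j ∈ Finset.univ.erase i,
        permHat N σ (sZ N i j (D i j (permHat N σ⁻¹ p))) =
        sZ N (σ i) (σ j) (D (σ i) (σ j) p) := by
      intro j hj
      have hij : i ≠ j := fun e => (Finset.mem_erase.1 hj).1 e.symm
      rw [permHat_sZ, D_conj D hD σ hij p]
    rw [Finset.sum_congr rfl hterm]
    have hinj : ∀ x ∈ Finset.univ.erase i, ∀ y ∈ Finset.univ.erase i,
        σ x = σ y → x = y := fun x _ y _ h => σ.injective h
    have himage : (Finset.univ.erase i).image σ = Finset.univ.erase (σ i) := by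
      rw [Finset.image_erase σ.injective, Finset.image_univ_equiv]
    rw [← himage, Finset.sum_image hinj]
end
end

section
/- The projection pr : V_1 → C[z,λ], Σ_σ p_σ ε_σ ↦ p_id, restricts to a C-linear isomorphism from V_1^{S^R} onto C[z,λ], and restricts to a C-linear isomorphism from W = V_1^{S^L} ∩ V_1^{S^R} onto P_N. -/
open MvPolynomial

noncomputable section

/-- The algebra of multi-symmetric polynomials `P_N`. -/
def PN (N : ℕ) : Subalgebra ℂ (Rzl N) :=
  ⨅ σ : Equiv.Perm (Fin N), AlgHom.equalizer (permHat N σ).toAlgHom (AlgHom.id ℂ (Rzl N))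

/-- The free `ℂ[z,λ]`-module `V_1` with basis `{ε_τ : τ ∈ S_N}`, realized as
functions `S_N → ℂ[z,λ]`. -/
abbrev V1 (N : ℕ) := Equiv.Perm (Fin N) → Rzl N

/-- The left action generator: `T_ij^L (p ε_τ) = s_ij^λ(p) ε_{s_ij τ}`. -/
def TL (N : ℕ) (i j : Fin N) : Module.End ℂ (V1 N) :=
  (LinearMap.compLeft (sL N i j).toLinearMap (Equiv.Perm (Fin N))) ∘ₗ
    LinearMap.funLeft ℂ (Rzl N) (fun ρ => Equiv.swap i j * ρ)

/-- The right action generator: `T_ij^R (p ε_τ) = s_ij^z(p) ε_{τ s_ij}`. -/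
def TR (N : ℕ) (i j : Fin N) : Module.End ℂ (V1 N) :=
  (LinearMap.compLeft (sZ N i j).toLinearMap (Equiv.Perm (Fin N))) ∘ₗ
    LinearMap.funLeft ℂ (Rzl N) (fun ρ => ρ * Equiv.swap i j)

/-- The invariants of the left `S_N`-action on `V_1`. -/
def V1SL (N : ℕ) : Set (V1 N) := {F | ∀ i j : Fin N, i < j → TL N i j F = F}

/-- The invariants of the right `S_N`-action on `V_1`. -/
def V1SR (N : ℕ) : Set (V1 N) := {F | ∀ i j : Fin N, i < j → TR N i j F = F}

/-- `W = V_1^{S^L} ∩ V_1^{S^R}`. -/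
def WW (N : ℕ) : Set (V1 N) := V1SL N ∩ V1SR N


section Aux

variable {N : ℕ}

lemma key1 (a b c d : Equiv.Perm (Fin N)) (p : Rzl N) :
    rename ⇑(Equiv.sumCongr a b) (rename ⇑(Equiv.sumCongr c d) p)
      = rename ⇑(Equiv.sumCongr (a * c) (b * d)) p := by
  rw [rename_rename]
  congr 1
  rw [Equiv.Perm.mul_def, Equiv.Perm.mul_def, ← Equiv.sumCongr_trans, Equiv.coe_trans]

lemma key_one (p : Rzl N) :
    rename ⇑(Equiv.sumCongr (1 : Equiv.Perm (Fin N)) (1 : Equiv.Perm (Fin N))) p = p := by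
  have h : ⇑(Equiv.sumCongr (1 : Equiv.Perm (Fin N)) (1 : Equiv.Perm (Fin N))) = id := by
    ext x; cases x <;> rfl
  rw [h, rename_id, AlgHom.id_apply]

lemma TR_apply (i j : Fin N) (F : V1 N) (τ : Equiv.Perm (Fin N)) :
    TR N i j F τ
      = rename ⇑(Equiv.sumCongr (Equiv.swap i j) (1 : Equiv.Perm (Fin N)))
          (F (τ * Equiv.swap i j)) := rfl

lemma TL_apply (i j : Fin N) (F : V1 N) (τ : Equiv.Perm (Fin N)) :
    TL N i j F τ
      = rename ⇑(Equiv.sumCongr (1 : Equiv.Perm (Fin N)) (Equiv.swap i j))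
          (F (Equiv.swap i j * τ)) := rfl

lemma permHat_apply (σ : Equiv.Perm (Fin N)) (p : Rzl N) :
    permHat N σ p = rename ⇑(Equiv.sumCongr σ σ) p := rfl

lemma mem_PN_iff (p : Rzl N) :
    p ∈ PN N ↔ ∀ σ : Equiv.Perm (Fin N), rename ⇑(Equiv.sumCongr σ σ) p = p := by
  simp only [PN, Algebra.mem_iInf, AlgHom.mem_equalizer, AlgEquiv.toAlgHom_eq_coe,
    AlgHom.coe_coe, AlgHom.coe_id, id_eq]
  rfl

/-- On the right-invariants, `F σ` is determined by `F 1`. -/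
lemma V1SR_eq {F : V1 N} (hF : F ∈ V1SR N) (σ : Equiv.Perm (Fin N)) :
    F σ = rename ⇑(Equiv.sumCongr σ⁻¹ (1 : Equiv.Perm (Fin N))) (F 1) := by
  have hswap : ∀ x y : Fin N, x ≠ y → ∀ τ,
      rename ⇑(Equiv.sumCongr (Equiv.swap x y) (1 : Equiv.Perm (Fin N)))
        (F (τ * Equiv.swap x y)) = F τ := by
    intro x y hxy τ
    rcases hxy.lt_or_gt with h | h
    · have := congrFun (hF x y h) τ
      rwa [TR_apply] at this
    · have := congrFun (hF y x h) τ
      rwa [TR_apply, Equiv.swap_comm] at this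
  refine Equiv.Perm.swap_induction_on' σ ?_ ?_
  · rw [inv_one, key_one]
  · intro ρ x y hxy ih
    have h2 := hswap x y hxy ρ
    calc F (ρ * Equiv.swap x y)
        = rename ⇑(Equiv.sumCongr (Equiv.swap x y) (1 : Equiv.Perm (Fin N)))
            (rename ⇑(Equiv.sumCongr (Equiv.swap x y) (1 : Equiv.Perm (Fin N)))
              (F (ρ * Equiv.swap x y))) := by
          rw [key1, Equiv.swap_mul_self, mul_one, key_one]
      _ = rename ⇑(Equiv.sumCongr (Equiv.swap x y) (1 : Equiv.Perm (Fin N))) (F ρ) := by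
          rw [h2]
      _ = rename ⇑(Equiv.sumCongr (Equiv.swap x y) (1 : Equiv.Perm (Fin N)))
            (rename ⇑(Equiv.sumCongr ρ⁻¹ (1 : Equiv.Perm (Fin N))) (F 1)) := by rw [ih]
      _ = rename ⇑(Equiv.sumCongr (ρ * Equiv.swap x y)⁻¹ (1 : Equiv.Perm (Fin N))) (F 1) := by
          rw [key1, mul_one, mul_inv_rev, Equiv.swap_inv]

def toF (p : Rzl N) : V1 N :=
  fun σ => rename ⇑(Equiv.sumCongr σ⁻¹ (1 : Equiv.Perm (Fin N))) p

lemma toF_one (p : Rzl N) : toF p 1 = p := by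
  rw [toF, inv_one, key_one]

lemma toF_mem_V1SR (p : Rzl N) : toF p ∈ V1SR N := by
  intro i j _
  funext τ
  rw [TR_apply, toF, toF, key1, mul_one, mul_inv_rev, Equiv.swap_inv, ← mul_assoc,
    Equiv.swap_mul_self, one_mul]

lemma toF_mem_V1SL {p : Rzl N} (hp : p ∈ PN N) : toF p ∈ V1SL N := by
  rw [mem_PN_iff] at hp
  intro i j _
  funext τ
  rw [TL_apply, toF, toF, key1, one_mul, mul_inv_rev, Equiv.swap_inv]
  calc rename ⇑(Equiv.sumCongr (τ⁻¹ * Equiv.swap i j) (Equiv.swap i j * 1)) p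
      = rename ⇑(Equiv.sumCongr (τ⁻¹ * Equiv.swap i j)
          ((1 : Equiv.Perm (Fin N)) * Equiv.swap i j)) p := by
        rw [mul_one, one_mul]
    _ = rename ⇑(Equiv.sumCongr τ⁻¹ (1 : Equiv.Perm (Fin N)))
          (rename ⇑(Equiv.sumCongr (Equiv.swap i j) (Equiv.swap i j)) p) := (key1 _ _ _ _ _).symm
    _ = rename ⇑(Equiv.sumCongr τ⁻¹ (1 : Equiv.Perm (Fin N))) p := by rw [hp]

lemma mem_PN_of_W {F : V1 N} (hF : F ∈ WW N) : F 1 ∈ PN N := by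
  obtain ⟨hL, hR⟩ := hF
  have hswap : ∀ x y : Fin N, x ≠ y →
      rename ⇑(Equiv.sumCongr (Equiv.swap x y) (Equiv.swap x y)) (F 1) = F 1 := by
    intro x y hxy
    have key : ∀ i j : Fin N, i < j →
        rename ⇑(Equiv.sumCongr (Equiv.swap i j) (Equiv.swap i j)) (F 1) = F 1 := by
      intro i j hij
      have h1 := congrFun (hL i j hij) 1
      rw [TL_apply, mul_one, V1SR_eq hR (Equiv.swap i j), Equiv.swap_inv, key1, one_mul,
        mul_one] at h1
      exact h1
    rcases hxy.lt_or_gt with h | h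
    · exact key x y h
    · rw [Equiv.swap_comm]; exact key y x h
  rw [mem_PN_iff]
  intro σ
  refine Equiv.Perm.swap_induction_on' σ ?_ ?_
  · exact key_one (F 1)
  · intro ρ x y hxy ih
    rw [← key1, hswap x y hxy, ih]

end Aux

set_option synthInstance.maxHeartbeats 1000000 in
/-- The projection `pr : Σ_σ p_σ ε_σ ↦ p_id` restricts to a linear isomorphism
from `V_1^{S^R}` onto `ℂ[z,λ]`, and from `W` onto `P_N`. -/
theorem stmt10 (N : ℕ) (hN : 0 < N) :
    Set.InjOn (fun F : V1 N => F 1) (V1SR N) ∧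
    (fun F : V1 N => F 1) '' (V1SR N) = Set.univ ∧
    Set.InjOn (fun F : V1 N => F 1) (WW N) ∧
    (fun F : V1 N => F 1) '' (WW N) = (PN N : Set (Rzl N)) := by
  have inj : Set.InjOn (fun F : V1 N => F 1) (V1SR N) := by
    intro F hF G hG h
    funext σ
    rw [V1SR_eq hF, V1SR_eq hG]
    exact congrArg _ h
  refine ⟨inj, ?_, inj.mono (fun F hF => hF.2), ?_⟩
  · ext p
    simp only [Set.mem_image, Set.mem_univ, iff_true]
    exact ⟨toF p, toF_mem_V1SR p, toF_one p⟩
  · ext p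
    simp only [Set.mem_image, SetLike.mem_coe]
    constructor
    · rintro ⟨F, hF, rfl⟩
      exact mem_PN_of_W hF
    · intro hp
      exact ⟨toF p, ⟨toF_mem_V1SL hp, toF_mem_V1SR p⟩, toF_one p⟩
end
end
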